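/- Let R = ℂ[[h]] be the ring of formal power series over ℂ, M = R² the free R-module with basis e₁,e₂, and a,b,a',b' ∈ R. Let ·ₕ and ·ₕ' be the R-bilinear operations A_h^{a,b} and A_h^{a',b'} on M (so e₁·ₕe₁ = a e₁ + b e₂, e₁·ₕe₂ = (a+h)e₂, e₂·ₕe₁ = a e₂, e₂·ₕe₂ = 0, and similarly for ·ₕ' with a',b'). Then there exists an R-linear automorphism f of M with f(x) − x ∈ hM for all x ∈ M and f(x·ₕy) = f(x)·ₕ'f(y) for all x,y ∈ M, if and only if a = a' and there exist ε, μ ∈ R with ε − 1 ∈ hR such that b' = bε − μh(a + h). -/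

import Mathlib

/-- Two Novikov products A_h^{a,b} and A_h^{a',b'} on M = ℂ[[h]]² are
equivalent (via an R-linear automorphism f with f ≡ id mod h intertwining the products)
if and only if a = a' and b' = bε − μh(a+h) for some ε ≡ 1 (mod h) and μ ∈ ℂ[[h]]. -/
theorem stmt_18 (a b a' b' : PowerSeries ℂ)
    (mul mul' : (Fin 2 → PowerSeries ℂ) →ₗ[PowerSeries ℂ]
        (Fin 2 → PowerSeries ℂ) →ₗ[PowerSeries ℂ] (Fin 2 → PowerSeries ℂ))
    (e₁ e₂ : Fin 2 → PowerSeries ℂ) (he₁ : e₁ = ![1, 0]) (he₂ : e₂ = ![0, 1])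
    (h11 : mul e₁ e₁ = a • e₁ + b • e₂)
    (h12 : mul e₁ e₂ = (a + PowerSeries.X) • e₂)
    (h21 : mul e₂ e₁ = a • e₂)
    (h22 : mul e₂ e₂ = 0)
    (h11' : mul' e₁ e₁ = a' • e₁ + b' • e₂)
    (h12' : mul' e₁ e₂ = (a' + PowerSeries.X) • e₂)
    (h21' : mul' e₂ e₁ = a' • e₂)
    (h22' : mul' e₂ e₂ = 0) :
    (∃ f : (Fin 2 → PowerSeries ℂ) ≃ₗ[PowerSeries ℂ] (Fin 2 → PowerSeries ℂ),
        (∀ x : Fin 2 → PowerSeries ℂ,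
          ∃ m : Fin 2 → PowerSeries ℂ, f x - x = (PowerSeries.X : PowerSeries ℂ) • m) ∧
        (∀ x y : Fin 2 → PowerSeries ℂ, f (mul x y) = mul' (f x) (f y))) ↔
    (a = a' ∧ ∃ ε μ : PowerSeries ℂ,
        (∃ r : PowerSeries ℂ, ε - 1 = PowerSeries.X * r) ∧
        b' = b * ε - μ * PowerSeries.X * (a + PowerSeries.X)) := by
  subst he₁ he₂
  have hX : (PowerSeries.X : PowerSeries ℂ) ≠ 0 := PowerSeries.X_ne_zero
  have hbasis : ∀ x : Fin 2 → PowerSeries ℂ,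
      x = x 0 • ![(1 : PowerSeries ℂ), 0] + x 1 • ![(0 : PowerSeries ℂ), 1] := by
    intro x; funext i; fin_cases i <;> simp
  have hmul : ∀ p q : Fin 2 → PowerSeries ℂ, mul p q =
      (p 0 * q 0 * a) • ![(1 : PowerSeries ℂ), 0] +
      (p 0 * q 0 * b + p 0 * q 1 * (a + PowerSeries.X) + p 1 * q 0 * a) •
        ![(0 : PowerSeries ℂ), 1] := by
    intro p q
    conv_lhs => rw [hbasis p, hbasis q]
    simp only [map_add, map_smul, LinearMap.add_apply, LinearMap.smul_apply,
      h11, h12, h21, h22, smul_zero, add_zero]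
    funext i; fin_cases i <;> simp <;> ring
  have hmul' : ∀ p q : Fin 2 → PowerSeries ℂ, mul' p q =
      (p 0 * q 0 * a') • ![(1 : PowerSeries ℂ), 0] +
      (p 0 * q 0 * b' + p 0 * q 1 * (a' + PowerSeries.X) + p 1 * q 0 * a') •
        ![(0 : PowerSeries ℂ), 1] := by
    intro p q
    conv_lhs => rw [hbasis p, hbasis q]
    simp only [map_add, map_smul, LinearMap.add_apply, LinearMap.smul_apply,
      h11', h12', h21', h22', smul_zero, add_zero]
    funext i; fin_cases i <;> simp <;> ring
  constructor
  · rintro ⟨f, hmod, hint⟩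
    obtain ⟨m, hm⟩ := hmod ![(1 : PowerSeries ℂ), 0]
    obtain ⟨m', hm'⟩ := hmod ![(0 : PowerSeries ℂ), 1]
    have hu0 : f ![(1 : PowerSeries ℂ), 0] 0 = 1 + PowerSeries.X * m 0 := by
      have := congrFun hm 0; simp at this; linear_combination this
    have hu1 : f ![(1 : PowerSeries ℂ), 0] 1 = PowerSeries.X * m 1 := by
      have := congrFun hm 1; simp at this; linear_combination this
    have hv1 : f ![(0 : PowerSeries ℂ), 1] 1 = 1 + PowerSeries.X * m' 1 := by
      have := congrFun hm' 1; simp at this; linear_combination this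
    have hv1ne : f ![(0 : PowerSeries ℂ), 1] 1 ≠ 0 := by
      rw [hv1]; intro hcon
      have := congrArg (PowerSeries.constantCoeff (R := ℂ)) hcon
      simp at this
    have E12 := hint ![(1 : PowerSeries ℂ), 0] ![(0 : PowerSeries ℂ), 1]
    rw [h12, map_smul, hmul'] at E12
    have E21 := hint ![(0 : PowerSeries ℂ), 1] ![(1 : PowerSeries ℂ), 0]
    rw [h21, map_smul, hmul'] at E21
    have E11 := hint ![(1 : PowerSeries ℂ), 0] ![(1 : PowerSeries ℂ), 0]
    rw [h11, map_add, map_smul, map_smul, hmul'] at E11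
    have E12_0 := congrFun E12 0
    have E21_0 := congrFun E21 0
    have E12_1 := congrFun E12 1
    have E21_1 := congrFun E21 1
    have E11_1 := congrFun E11 1
    simp at E12_0 E21_0 E12_1 E21_1 E11_1
    -- v 0 = 0
    have hv0 : f ![(0 : PowerSeries ℂ), 1] 0 = 0 := by
      have hz : (PowerSeries.X : PowerSeries ℂ) * f ![(0 : PowerSeries ℂ), 1] 0 = 0 := by
        linear_combination E12_0 - E21_0
      rcases mul_eq_zero.mp hz with h | h
      · exact absurd h hX
      · exact h
    -- u 0 = 1
    have hu0' : f ![(1 : PowerSeries ℂ), 0] 0 = 1 := by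
      have hz : f ![(0 : PowerSeries ℂ), 1] 1 *
          ((PowerSeries.X : PowerSeries ℂ) * (f ![(1 : PowerSeries ℂ), 0] 0 - 1)) = 0 := by
        linear_combination E21_1 - E12_1 +
          PowerSeries.X * f ![(1 : PowerSeries ℂ), 0] 1 * hv0
      rcases mul_eq_zero.mp hz with h | h
      · exact absurd h hv1ne
      · rcases mul_eq_zero.mp h with h | h
        · exact absurd h hX
        · exact sub_eq_zero.mp h
    have ha : a = a' := by
      have hz : (a - a') * f ![(0 : PowerSeries ℂ), 1] 1 = 0 := by
        linear_combination E21_1 + (f ![(1 : PowerSeries ℂ), 0] 0 * b' +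
          f ![(1 : PowerSeries ℂ), 0] 1 * (a' + PowerSeries.X)) * hv0 +
          a' * f ![(0 : PowerSeries ℂ), 1] 1 * hu0'
      rcases mul_eq_zero.mp hz with h | h
      · exact sub_eq_zero.mp h
      · exact absurd h hv1ne
    refine ⟨ha, f ![(0 : PowerSeries ℂ), 1] 1, m 1, ⟨m' 1, by linear_combination hv1⟩, ?_⟩
    rw [hu0', ← ha, hu1] at E11_1
    linear_combination -E11_1
  · rintro ⟨ha, ε, μ, ⟨r, hr⟩, hb'⟩
    subst ha
    have hc : PowerSeries.constantCoeff (R := ℂ) ε = 1 := by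
      have := congrArg (PowerSeries.constantCoeff (R := ℂ)) hr
      simp at this; linear_combination this
    have hinv : ε * ε⁻¹ = 1 :=
      PowerSeries.mul_inv_cancel _ (by rw [hc]; exact one_ne_zero)
    have hAB : (!![1, 0; μ * PowerSeries.X, ε] : Matrix (Fin 2) (Fin 2) (PowerSeries ℂ)) *
        !![1, 0; -(μ * PowerSeries.X) * ε⁻¹, ε⁻¹] = 1 := by
      refine Matrix.ext fun i j => ?_
      fin_cases i <;> fin_cases j <;>
        simp [Matrix.mul_apply, Fin.sum_univ_two, Matrix.one_apply]
      · linear_combination -(μ * PowerSeries.X) * hinv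
      · linear_combination hinv
    have hBA : (!![1, 0; -(μ * PowerSeries.X) * ε⁻¹, ε⁻¹] : Matrix (Fin 2) (Fin 2) (PowerSeries ℂ)) *
        !![1, 0; μ * PowerSeries.X, ε] = 1 := by
      refine Matrix.ext fun i j => ?_
      fin_cases i <;> fin_cases j <;>
        simp [Matrix.mul_apply, Fin.sum_univ_two, Matrix.one_apply]
      · ring
      · linear_combination hinv
    have key : ∀ x : Fin 2 → PowerSeries ℂ,
        Matrix.toLin' (!![1, 0; μ * PowerSeries.X, ε]) x =
          ![x 0, μ * PowerSeries.X * x 0 + ε * x 1] := by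
      intro x; funext i
      fin_cases i <;>
        simp [Matrix.toLin'_apply, Matrix.mulVec, dotProduct, Fin.sum_univ_two]
    refine ⟨LinearEquiv.ofLinear (Matrix.toLin' (!![1, 0; μ * PowerSeries.X, ε]))
        (Matrix.toLin' (!![1, 0; -(μ * PowerSeries.X) * ε⁻¹, ε⁻¹])) ?_ ?_, ?_, ?_⟩
    · rw [← Matrix.toLin'_mul, hAB, Matrix.toLin'_one]
    · rw [← Matrix.toLin'_mul, hBA, Matrix.toLin'_one]
    · intro x
      refine ⟨![0, μ * x 0 + r * x 1], ?_⟩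
      simp only [LinearEquiv.ofLinear_apply, key]
      funext i
      fin_cases i <;> (simp; try linear_combination x 1 * hr)
    · intro x y
      simp only [LinearEquiv.ofLinear_apply, key]
      rw [hmul x y, hmul']
      funext i
      fin_cases i <;> (simp; try linear_combination -(x 0 * y 0) * hb')
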